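/- For every compact oriented n-manifold M, the real and rational simplicial volumes coincide: ‖M,∂M‖ = ‖M,∂M‖_ℚ. More generally, for every i the change of coefficients map H_i(M,∂M;ℚ) → H_i(M,∂M;ℝ) preserves the ℓ¹-seminorm of every class. -/

import Mathlib

open scoped BigOperators
set_option maxSynthPendingDepth 3
noncomputable section

/-! ## The standard topological simplex and singular chains -/

/-- The standard topological `n`-simplex. -/
def TSimplex (n : ℕ) : Type :=
  {x : Fin (n + 1) → ℝ // (∀ i, 0 ≤ x i) ∧ ∑ i, x i = 1}

instance (n : ℕ) : TopologicalSpace (TSimplex n) := instTopologicalSpaceSubtype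

/-- The affine inclusion of the `i`-th face of the standard `(n+1)`-simplex. -/
def faceMap {n : ℕ} (i : Fin (n + 2)) : C(TSimplex n, TSimplex (n + 1)) where
  toFun x := ⟨fun j => ∑ k ∈ Finset.univ.filter (fun k => i.succAbove k = j), x.1 k, by
    constructor
    · intro j
      exact Finset.sum_nonneg fun k _ => x.2.1 k
    · rw [Finset.sum_fiberwise_of_maps_to (fun k _ => Finset.mem_univ (i.succAbove k)), x.2.2]⟩
  continuous_toFun := by
    apply Continuous.subtype_mk
    exact continuous_pi fun j => continuous_finset_sum _ fun k _ =>
      (continuous_apply k).comp continuous_subtype_val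

/-- The `j`-th vertex of the standard simplex. -/
def vertexPt {m : ℕ} (j : Fin (m + 1)) : TSimplex m :=
  ⟨fun i => if i = j then 1 else 0, by
    constructor
    · intro i; dsimp only; split <;> norm_num
    · simp⟩

set_option linter.unnecessarySeqFocus false in
/-- The affine map of the standard `1`-simplex onto the edge of the standard `k`-simplex
joining the vertices `a` and `b`. -/
def segMap {k : ℕ} (a b : Fin (k + 1)) : C(TSimplex 1, TSimplex k) where
  toFun x := ⟨fun j => (if j = a then x.1 0 else 0) + (if j = b then x.1 1 else 0), by
    constructor
    · intro j
      have h0 := x.2.1 0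
      have h1 := x.2.1 1
      dsimp only
      split <;> split <;> simp_all <;> positivity
    · have := x.2.2
      rw [Finset.sum_add_distrib]
      simp [Finset.sum_ite_eq', ← this, Fin.sum_univ_two]⟩
  continuous_toFun := by
    apply Continuous.subtype_mk
    apply continuous_pi
    intro j
    apply Continuous.add
    · split
      · exact (continuous_apply (0 : Fin 2)).comp continuous_subtype_val
      · exact continuous_const
    · split
      · exact (continuous_apply (1 : Fin 2)).comp continuous_subtype_val
      · exact continuous_const

/-- A singular `n`-simplex in `X`. -/
abbrev SingSimplex (n : ℕ) (X : Type) [TopologicalSpace X] : Type := C(TSimplex n, X)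

/-- Singular `n`-chains in `X` with coefficients in `R`. -/
abbrev SChain (R : Type) [Zero R] (n : ℕ) (X : Type) [TopologicalSpace X] : Type :=
  SingSimplex n X →₀ R

/-- The singular boundary operator. -/
def sbdry (R : Type) [CommRing R] {n : ℕ} {X : Type} [TopologicalSpace X] :
    SChain R (n + 1) X →ₗ[R] SChain R n X :=
  Finsupp.lsum R fun σ => LinearMap.toSpanSingleton R _
    (∑ i : Fin (n + 2), ((-1 : ℤ) ^ (i : ℕ)) • Finsupp.single (σ.comp (faceMap i)) (1 : R))

/-- The singular boundary operator, from degree `n` to degree `n - 1`. -/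
def sbdryN (R : Type) [CommRing R] (n : ℕ) {X : Type} [TopologicalSpace X] :
    SChain R n X →ₗ[R] SChain R (n - 1) X :=
  match n with
  | 0 => 0
  | (_ + 1) => sbdry R

/-- The `j`-th face of a singular `n`-simplex. -/
def faceOf {X : Type} [TopologicalSpace X] :
    (n : ℕ) → Fin (n + 1) → SingSimplex n X → SingSimplex (n - 1) X
  | 0, _, σ => σ
  | (_ + 1), k, σ => σ.comp (faceMap k)

/-- The edge of a singular `k`-simplex joining its `a`-th and `b`-th vertices. -/
def edgeOf {X : Type} [TopologicalSpace X] {k : ℕ} (a b : Fin (k + 1))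
    (σ : SingSimplex k X) : SingSimplex 1 X :=
  σ.comp (segMap a b)

/-- The submodule of chains supported on a subspace `A`. -/
def suppOn (R : Type) [CommRing R] (n : ℕ) {X : Type} [TopologicalSpace X] (A : Set X) :
    Submodule R (SChain R n X) :=
  Finsupp.supported R R {σ : SingSimplex n X | Set.range ⇑σ ⊆ A}

/-- `z` is a relative cycle of the pair `(X, A)`. -/
def IsRelCycle (R : Type) [CommRing R] (n : ℕ) {X : Type} [TopologicalSpace X] (A : Set X)
    (z : SChain R n X) : Prop :=
  sbdryN R n z ∈ suppOn R (n - 1) A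

/-- Two chains are homologous relative to `A`. -/
def RelHomologous (R : Type) [CommRing R] (n : ℕ) {X : Type} [TopologicalSpace X] (A : Set X)
    (z z' : SChain R n X) : Prop :=
  ∃ w : SChain R (n + 1) X, z - z' - sbdry R w ∈ suppOn R n A

/-- The ℓ¹-norm of a relative chain: the sum of the norms of the coefficients of the
simplices not contained in `A`. -/
def relNorm {R : Type} [NormedCommRing R] {n : ℕ} {X : Type} [TopologicalSpace X]
    (A : Set X) (z : SChain R n X) : ℝ :=
  letI : DecidablePred fun σ : SingSimplex n X => ¬ Set.range ⇑σ ⊆ A :=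
    fun _ => Classical.dec _
  ∑ σ ∈ z.support.filter (fun σ : SingSimplex n X => ¬ Set.range ⇑σ ⊆ A), ‖z σ‖

/-- `c` is an integral fundamental cycle of the pair `(X, A)` in degree `n`: it is a relative
cycle whose class generates `H_n(X, A; ℤ)`.  For a compact connected oriented `n`-manifold
`X` with boundary `A`, this holds exactly for the representatives of `±[X, A]`. -/
def IsFundCycle (n : ℕ) {X : Type} [TopologicalSpace X] (A : Set X) (c : SChain ℤ n X) : Prop :=
  IsRelCycle ℤ n A c ∧
    ∀ z : SChain ℤ n X, IsRelCycle ℤ n A z → ∃ k : ℤ, RelHomologous ℤ n A z (k • c)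

/-- Change of coefficients `ℤ → ℝ` on chains. -/
def intToReal {n : ℕ} {X : Type} [TopologicalSpace X] (c : SChain ℤ n X) : SChain ℝ n X :=
  Finsupp.mapRange (fun k : ℤ => (k : ℝ)) (by norm_num) c

/-- Change of coefficients `ℤ → ℚ` on chains. -/
def intToRat {n : ℕ} {X : Type} [TopologicalSpace X] (c : SChain ℤ n X) : SChain ℚ n X :=
  Finsupp.mapRange (fun k : ℤ => (k : ℚ)) (by norm_num) c

/-- Change of coefficients `ℚ → ℝ` on chains. -/
def ratToReal {n : ℕ} {X : Type} [TopologicalSpace X] (c : SChain ℚ n X) : SChain ℝ n X :=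
  Finsupp.mapRange (fun k : ℚ => (k : ℝ)) (by norm_num) c

/-- The pair `(X, A)` is homologically orientable in degree `n`: the `n`-th relative
integral homology has a generator which is not trivial. -/
def HomOrientable (n : ℕ) (X : Type) [TopologicalSpace X] (A : Set X) : Prop :=
  ∃ c : SChain ℤ n X, IsFundCycle n A c ∧ ¬ RelHomologous ℤ n A c 0

/-- The simplicial volume of a pair `(X, A)`, where `X` is a compact connected oriented
`n`-manifold with boundary `A`: the infimum of the ℓ¹-norms of the real relative cycles
representing (the real image of) an integral fundamental class. -/
def simVolOr (n : ℕ) (X : Type) [TopologicalSpace X] (A : Set X) : ℝ :=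
  sInf {r : ℝ | ∃ z : SChain ℝ n X,
    (∃ c : SChain ℤ n X, IsFundCycle n A c ∧ RelHomologous ℝ n A z (intToReal c)) ∧
    r = relNorm A z}

/-- Rational version of `simVolOr`. -/
def simVolOrQ (n : ℕ) (X : Type) [TopologicalSpace X] (A : Set X) : ℝ :=
  sInf {r : ℝ | ∃ z : SChain ℚ n X,
    (∃ c : SChain ℤ n X, IsFundCycle n A c ∧ RelHomologous ℚ n A z (intToRat c)) ∧
    r = relNorm A z}

/-- `p` is a two-sheeted covering map. -/
def IsDoubleCover {Y X : Type} [TopologicalSpace Y] [TopologicalSpace X] (p : Y → X) : Prop :=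
  IsCoveringMap p ∧ ∀ x : X, Nat.card (p ⁻¹' {x}) = 2

/-- Simplicial volume of a connected pair: the norm of the fundamental class if the pair is
(homologically) orientable, and one half of the simplicial volume of the orientable double
cover otherwise. -/
def simVolConn (n : ℕ) (X : Type) [TopologicalSpace X] (A : Set X) : ℝ :=
  letI := Classical.propDecidable (HomOrientable n X A)
  if HomOrientable n X A then simVolOr n X A
  else (1 / 2) * sInf {r : ℝ | ∃ (Y : TopCat.{0}) (p : ↥Y → X), IsDoubleCover p ∧
    HomOrientable n ↥Y (p ⁻¹' A) ∧ r = simVolOr n ↥Y (p ⁻¹' A)}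

/-- The simplicial volume `‖X, A‖` of a compact manifold `X` with boundary `A`:
the sum over the connected components. -/
def SimVol (n : ℕ) (X : Type) [TopologicalSpace X] (A : Set X) : ℝ :=
  ∑ᶠ c : ConnectedComponents X,
    simVolConn n {x : X // ConnectedComponents.mk x = c} {x | ↑x ∈ A}

/-- Rational simplicial volume (for orientable manifolds). -/
def SimVolQ (n : ℕ) (X : Type) [TopologicalSpace X] (A : Set X) : ℝ :=
  ∑ᶠ c : ConnectedComponents X,
    simVolOrQ n {x : X // ConnectedComponents.mk x = c} {x | ↑x ∈ A}

/-! ## Topological manifolds with boundary -/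

/-- `X` is a topological `n`-manifold, possibly with boundary. -/
def IsManifoldWithBoundary (n : ℕ) (X : Type) [TopologicalSpace X] : Prop :=
  T2Space X ∧ SecondCountableTopology X ∧ ∀ x : X, ∃ U : Set X, x ∈ U ∧ IsOpen U ∧
    (Nonempty (U ≃ₜ EuclideanSpace ℝ (Fin n)) ∨
      Nonempty (U ≃ₜ {y : EuclideanSpace ℝ (Fin n) // 0 ≤ ∑ i, y i}))

/-- The boundary of a topological `n`-manifold: the points having no neighbourhood
homeomorphic to `ℝⁿ`. -/
def intBoundary (n : ℕ) (X : Type) [TopologicalSpace X] : Set X :=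
  {x | ¬ ∃ U : Set X, x ∈ U ∧ IsOpen U ∧ Nonempty (U ≃ₜ EuclideanSpace ℝ (Fin n))}


section Aux
variable {X : Type} [TopologicalSpace X]

open Classical in
/-- integer boundary coefficient -/
noncomputable def bcoef {n : ℕ} (τ : SingSimplex (n+1) X) (σ : SingSimplex n X) : ℤ :=
  ∑ i : Fin (n+2), (-1:ℤ)^(i:ℕ) * (if τ.comp (faceMap i) = σ then 1 else 0)

lemma sbdry_apply {R : Type} [CommRing R] {n : ℕ} (c : SChain R (n+1) X) (σ : SingSimplex n X) :
    sbdry R c σ = ∑ τ ∈ c.support, c τ * ((bcoef τ σ : ℤ) : R) := by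
  classical
  rw [sbdry, Finsupp.lsum_apply, Finsupp.sum, Finsupp.finset_sum_apply]
  refine Finset.sum_congr rfl fun τ _ => ?_
  rw [LinearMap.toSpanSingleton_apply, bcoef]
  simp only [Finsupp.smul_apply, Finsupp.finset_sum_apply, Finsupp.single_apply,
    smul_eq_mul, zsmul_eq_mul, Finset.mul_sum]
  push_cast
  rw [Finset.mul_sum]

lemma mem_suppOn_iff {R : Type} [CommRing R] {n : ℕ} {A : Set X} {z : SChain R n X} :
    z ∈ suppOn R n A ↔ ∀ σ : SingSimplex n X, ¬ Set.range ⇑σ ⊆ A → z σ = 0 := by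
  rw [suppOn, Finsupp.mem_supported']
  constructor
  · intro h σ hσ; exact h σ hσ
  · intro h σ hσ; exact h σ hσ

lemma ratToReal_apply {n : ℕ} (c : SChain ℚ n X) (σ : SingSimplex n X) :
    ratToReal c σ = (c σ : ℝ) := Finsupp.mapRange_apply

lemma ratToReal_support {n : ℕ} (c : SChain ℚ n X) : (ratToReal c).support = c.support :=
  Finsupp.support_mapRange_of_injective _ _ Rat.cast_injective

lemma ratToReal_sub {n : ℕ} (a b : SChain ℚ n X) :
    ratToReal (a - b) = ratToReal a - ratToReal b := by
  ext σ; simp [ratToReal_apply, ratToReal]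

lemma ratToReal_sbdry {n : ℕ} (c : SChain ℚ (n+1) X) :
    ratToReal (sbdry ℚ c) = sbdry ℝ (ratToReal c) := by
  ext σ
  rw [ratToReal_apply, sbdry_apply, sbdry_apply, ratToReal_support]
  push_cast
  exact Finset.sum_congr rfl fun τ _ => by rw [ratToReal_apply]

lemma ratToReal_suppOn {n : ℕ} {A : Set X} {z : SChain ℚ n X} :
    ratToReal z ∈ suppOn ℝ n A ↔ z ∈ suppOn ℚ n A := by
  simp only [mem_suppOn_iff, ratToReal_apply, Rat.cast_eq_zero]

lemma ratToReal_sbdryN {m : ℕ} (c : SChain ℚ m X) :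
    ratToReal (sbdryN ℚ m c) = sbdryN ℝ m (ratToReal c) := by
  cases m with
  | zero => simp [sbdryN]; ext σ; simp [ratToReal, Finsupp.mapRange_apply]
  | succ m => exact ratToReal_sbdry c

lemma ratToReal_intToRat {n : ℕ} (c : SChain ℤ n X) : ratToReal (intToRat c) = intToReal c := by
  ext σ; simp [ratToReal, intToRat, intToReal, Finsupp.mapRange_apply]

lemma relNorm_nonneg {R : Type} [NormedCommRing R] {n : ℕ} (A : Set X) (z : SChain R n X) :
    0 ≤ relNorm A z := by
  rw [relNorm]
  exact Finset.sum_nonneg fun σ _ => norm_nonneg _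

lemma relNorm_ratToReal {n : ℕ} (A : Set X) (z : SChain ℚ n X) :
    relNorm A (ratToReal z) = relNorm A z := by
  rw [relNorm, relNorm]
  rw [ratToReal_support]
  refine Finset.sum_congr (by congr) fun σ _ => by rw [ratToReal_apply, Rat.norm_cast_real]

lemma ratToReal_relHomologous {n : ℕ} {A : Set X} {z z' : SChain ℚ n X}
    (h : RelHomologous ℚ n A z z') : RelHomologous ℝ n A (ratToReal z) (ratToReal z') := by
  obtain ⟨w, hw⟩ := h
  exact ⟨ratToReal w, by
    rw [← ratToReal_sbdry, ← ratToReal_sub, ← ratToReal_sub]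
    exact ratToReal_suppOn.2 hw⟩

lemma ratToReal_isRelCycle {n : ℕ} {A : Set X} {z : SChain ℚ n X}
    (h : IsRelCycle ℚ n A z) : IsRelCycle ℝ n A (ratToReal z) := by
  rw [IsRelCycle, ← ratToReal_sbdryN]
  exact ratToReal_suppOn.2 h

lemma exists_rat_proj (s : Finset ℝ) {ε : ℝ} (hε : 0 < ε) :
    ∃ (V : Submodule ℚ ℝ) (p : ℝ → ℚ),
      (∀ x ∈ s, x ∈ V) ∧
      (∀ q : ℚ, (q:ℝ) ∈ V) ∧
      (∀ x ∈ V, ∀ y ∈ V, p (x + y) = p x + p y) ∧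
      (∀ (q : ℚ), ∀ x ∈ V, p ((q:ℝ) * x) = q * p x) ∧
      (∀ q : ℚ, p (q:ℝ) = q) ∧
      (∀ x ∈ s, |(p x : ℝ) - x| ≤ ε) := by
  classical
  set s' : Finset ℝ := insert (1:ℝ) s with hs'
  set V : Submodule ℚ ℝ := Submodule.span ℚ (s' : Set ℝ) with hV
  haveI : FiniteDimensional ℚ V := FiniteDimensional.span_finset ℚ s'
  have h1 : (1:ℝ) ∈ V := Submodule.subset_span (by simp [hs'])
  have hsV : ∀ x ∈ s, x ∈ V := fun x hx => Submodule.subset_span (by simp [hs', hx])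
  have hqV : ∀ q : ℚ, (q:ℝ) ∈ V := by
    intro q
    have : (q:ℝ) = q • (1:ℝ) := by rw [Rat.smul_def, mul_one]
    rw [this]
    exact Submodule.smul_mem _ _ h1
  set one : V := ⟨1, h1⟩ with hone
  have hone0 : one ≠ 0 := by
    intro h
    exact one_ne_zero (α := ℝ) (congrArg Subtype.val h)
  have li : LinearIndependent ℚ (fun x : ({one} : Set V) => (x : V)) :=
    (linearIndepOn_singleton_iff ℚ (v := (id : V → V))).2 hone0
  set b := Module.Basis.extend li with hb
  haveI : Fintype ↑(LinearIndepOn.extend (K := ℚ) (v := id) (s := ({one} : Set V)) li (Set.subset_univ _)) := FiniteDimensional.fintypeBasisIndex b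
  have hmem : one ∈ LinearIndepOn.extend (K := ℚ) (v := id) (s := ({one} : Set V)) li (Set.subset_univ _) := Module.Basis.subset_extend li rfl
  set i₀ : ↑(LinearIndepOn.extend (K := ℚ) (v := id) (s := ({one} : Set V)) li (Set.subset_univ _)) := ⟨one, hmem⟩ with hi₀
  have hbi₀ : b i₀ = one := Module.Basis.extend_apply_self li i₀
  set B : ℝ := 1 + ∑ x ∈ s, ∑ i, |((b.repr (if h : x ∈ V then ⟨x, h⟩ else 0)) i : ℝ)| with hB
  have hBpos : 0 < B := by
    rw [hB]
    have : (0:ℝ) ≤ ∑ x ∈ s, ∑ i, |((b.repr (if h : x ∈ V then ⟨x, h⟩ else 0)) i : ℝ)| :=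
      Finset.sum_nonneg fun x _ => Finset.sum_nonneg fun i _ => abs_nonneg _
    linarith
  set δ : ℝ := ε / B with hδ
  have hδpos : 0 < δ := div_pos hε hBpos
  set c : ↑(LinearIndepOn.extend (K := ℚ) (v := id) (s := ({one} : Set V)) li (Set.subset_univ _)) → ℚ := fun i =>
    if i = i₀ then 1 else Classical.choose (exists_rat_near (K := ℝ) ((b i : V) : ℝ) hδpos)
    with hc
  have hcapprox : ∀ i, |((b i : V) : ℝ) - (c i : ℝ)| ≤ δ := by
    intro i
    by_cases h : i = i₀
    · subst h
      have hci : c i₀ = 1 := if_pos rfl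
      rw [hci, hbi₀]
      have : ((one : V) : ℝ) = 1 := rfl
      rw [this]
      norm_num
      linarith
    · have hci : c i = Classical.choose (exists_rat_near (K := ℝ) ((b i : V) : ℝ) hδpos) :=
        if_neg h
      rw [hci]
      exact le_of_lt (Classical.choose_spec (exists_rat_near (K := ℝ) ((b i : V) : ℝ) hδpos))
  set p : ℝ → ℚ := fun x => if h : x ∈ V then ∑ i, (b.repr ⟨x, h⟩) i * c i else 0 with hp
  have hpval : ∀ x (h : x ∈ V), p x = ∑ i, (b.repr ⟨x, h⟩) i * c i := by
    intro x h; rw [hp]; exact dif_pos h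
  have hadd : ∀ x ∈ V, ∀ y ∈ V, p (x + y) = p x + p y := by
    intro x hx y hy
    rw [hpval x hx, hpval y hy, hpval (x+y) (add_mem hx hy)]
    have : (⟨x+y, add_mem hx hy⟩ : V) = ⟨x, hx⟩ + ⟨y, hy⟩ := rfl
    rw [this, map_add, ← Finset.sum_add_distrib]
    exact Finset.sum_congr rfl fun i _ => by rw [Finsupp.add_apply]; ring
  have hsmul : ∀ (q : ℚ), ∀ x ∈ V, p ((q:ℝ) * x) = q * p x := by
    intro q x hx
    have hqx : (q:ℝ) * x ∈ V := by
      rw [← Rat.smul_def]; exact Submodule.smul_mem _ _ hx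
    rw [hpval _ hqx, hpval x hx]
    have : (⟨(q:ℝ) * x, hqx⟩ : V) = q • ⟨x, hx⟩ := by
      apply Subtype.ext
      simp [Rat.smul_def]
    rw [this, map_smul, Finset.mul_sum]
    exact Finset.sum_congr rfl fun i _ => by rw [Finsupp.smul_apply, smul_eq_mul]; ring
  have hone' : p 1 = 1 := by
    rw [hpval 1 h1]
    have : (⟨(1:ℝ), h1⟩ : V) = b i₀ := by rw [hbi₀]
    rw [this, Module.Basis.repr_self, Finset.sum_eq_single i₀]
    · simp [hc]
    · intro j _ hj; simp [Finsupp.single_apply, Ne.symm hj]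
    · intro h; exact absurd (Finset.mem_univ i₀) h
  have hrat : ∀ q : ℚ, p (q:ℝ) = q := by
    intro q
    have h' : ((q:ℝ)) = (q:ℝ) * 1 := by ring
    rw [h', hsmul q 1 h1, hone', mul_one]
  refine ⟨V, p, hsV, hqV, hadd, hsmul, hrat, ?_⟩
  intro x hx
  have hxV := hsV x hx
  rw [hpval x hxV]
  -- x = ∑ i, repr x i • b i
  have hxsum : x = ∑ i, ((b.repr ⟨x, hxV⟩) i : ℝ) * ((b i : V) : ℝ) := by
    calc x = ((∑ i, (b.repr ⟨x, hxV⟩) i • b i : V) : ℝ) := by rw [b.sum_repr ⟨x, hxV⟩]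
      _ = ∑ i, ((b.repr ⟨x, hxV⟩) i : ℝ) * ((b i : V) : ℝ) := by
          rw [Submodule.coe_sum]
          exact Finset.sum_congr rfl fun i _ => by
            rw [SetLike.val_smul, Rat.smul_def]
  have hps : ((∑ i, (b.repr ⟨x, hxV⟩) i * c i : ℚ) : ℝ)
      = ∑ i, ((b.repr ⟨x, hxV⟩) i : ℝ) * (c i : ℝ) := by push_cast; rfl
  rw [hps]
  have key : (∑ i, ((b.repr ⟨x, hxV⟩) i : ℝ) * (c i : ℝ)) - x
      = ∑ i, ((b.repr ⟨x, hxV⟩) i : ℝ) * ((c i : ℝ) - ((b i : V) : ℝ)) := by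
    have h3 : ∑ i, ((b.repr ⟨x, hxV⟩) i : ℝ) * ((c i : ℝ) - ((b i : V) : ℝ))
        = (∑ i, ((b.repr ⟨x, hxV⟩) i : ℝ) * (c i : ℝ))
          - ∑ i, ((b.repr ⟨x, hxV⟩) i : ℝ) * ((b i : V) : ℝ) := by
      rw [← Finset.sum_sub_distrib]
      exact Finset.sum_congr rfl fun i _ => by ring
    rw [h3, ← hxsum]
  rw [key]
  calc |∑ i, ((b.repr ⟨x, hxV⟩) i : ℝ) * ((c i : ℝ) - ((b i : V) : ℝ))|
    _ ≤ ∑ i, |((b.repr ⟨x, hxV⟩) i : ℝ)| * δ := by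
        refine (Finset.abs_sum_le_sum_abs _ _).trans ?_
        refine Finset.sum_le_sum fun i _ => ?_
        rw [abs_mul]
        refine mul_le_mul_of_nonneg_left ?_ (abs_nonneg _)
        rw [abs_sub_comm]
        exact hcapprox i
    _ ≤ B * δ := by
        rw [← Finset.sum_mul]
        refine mul_le_mul_of_nonneg_right ?_ (le_of_lt hδpos)
        rw [hB]
        have hterm : ∑ i, |((b.repr ⟨x, hxV⟩) i : ℝ)|
            = ∑ i, |((b.repr (if h : x ∈ V then ⟨x, h⟩ else 0)) i : ℝ)| := by
          rw [dif_pos hxV]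
        rw [hterm]
        have hle : ∑ i, |((b.repr (if h : x ∈ V then ⟨x, h⟩ else 0)) i : ℝ)|
            ≤ ∑ y ∈ s, ∑ i, |((b.repr (if h : y ∈ V then ⟨y, h⟩ else 0)) i : ℝ)| :=
          Finset.single_le_sum
            (f := fun y => ∑ i, |((b.repr (if h : y ∈ V then ⟨y, h⟩ else 0)) i : ℝ)|)
            (fun y _ => Finset.sum_nonneg fun i _ => abs_nonneg _) hx
        linarith
    _ = ε := by
        rw [hδ]
        field_simp

lemma chain_approx {m : ℕ} (A : Set X) (y : SChain ℚ m X)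
    (w : SChain ℝ m X) (W : SChain ℝ (m+1) X)
    (h : w - ratToReal y - sbdry ℝ W ∈ suppOn ℝ m A)
    (P : Prop) (hcyc : P → sbdryN ℝ m w ∈ suppOn ℝ (m-1) A)
    {ε : ℝ} (hε : 0 < ε) :
    ∃ (w' : SChain ℚ m X) (W' : SChain ℚ (m+1) X),
      w' - y - sbdry ℚ W' ∈ suppOn ℚ m A ∧
      (P → sbdryN ℚ m w' ∈ suppOn ℚ (m-1) A) ∧
      relNorm A w' ≤ relNorm A w + ε := by
  classical
  set s : Finset ℝ := w.support.image w ∪ W.support.image W with hs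
  have hδpos : 0 < ε / (w.support.card + 1) := by positivity
  obtain ⟨V, p, hsV, hqV, hadd, hsmul, hrat, happ⟩ := exists_rat_proj s hδpos
  set δ : ℝ := ε / (w.support.card + 1) with hδ
  have hwV : ∀ σ, w σ ∈ V := by
    intro σ
    by_cases hσ : σ ∈ w.support
    · exact hsV _ (Finset.mem_union_left _ (Finset.mem_image_of_mem _ hσ))
    · rw [Finsupp.notMem_support_iff.1 hσ]; exact zero_mem V
  have hWV : ∀ τ, W τ ∈ V := by
    intro τ
    by_cases hτ : τ ∈ W.support
    · exact hsV _ (Finset.mem_union_right _ (Finset.mem_image_of_mem _ hτ))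
    · rw [Finsupp.notMem_support_iff.1 hτ]; exact zero_mem V
  have hp0 : p 0 = 0 := by
    have := hrat 0; simpa using this
  have hmulV : ∀ (q : ℚ), ∀ x ∈ V, (q:ℝ) * x ∈ V := by
    intro q x hx
    rw [← Rat.smul_def]; exact Submodule.smul_mem _ _ hx
  have hpsum : ∀ {γ : Type} (t : Finset γ) (f : γ → ℝ), (∀ j ∈ t, f j ∈ V) →
      p (∑ j ∈ t, f j) = ∑ j ∈ t, p (f j) := by
    intro γ t
    induction t using Finset.induction with
    | empty => intro f _; simpa using hp0
    | insert a t hni ih =>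
      intro f hf
      rw [Finset.sum_insert hni, Finset.sum_insert hni]
      rw [hadd _ (hf _ (Finset.mem_insert_self _ _))
        _ (Submodule.sum_mem V fun j hj => hf j (Finset.mem_insert_of_mem hj))]
      rw [ih f fun j hj => hf j (Finset.mem_insert_of_mem hj)]
  have hpsub : ∀ x ∈ V, ∀ z ∈ V, p (x - z) = p x - p z := by
    intro x hx z hz
    have hz' : ((-1 : ℚ):ℝ) * z ∈ V := hmulV _ _ hz
    have : x - z = x + ((-1 : ℚ):ℝ) * z := by push_cast; ring
    rw [this, hadd _ hx _ hz', hsmul (-1) z hz]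
    ring
  -- the rational chains
  set w' : SChain ℚ m X := Finsupp.onFinset w.support (fun σ => p (w σ))
    (fun σ hσ => by
      by_contra hns
      apply hσ
      show p (w σ) = 0
      rw [Finsupp.notMem_support_iff.1 hns, hp0]) with hw'
  set W' : SChain ℚ (m+1) X := Finsupp.onFinset W.support (fun τ => p (W τ))
    (fun τ hτ => by
      by_contra hns
      apply hτ
      show p (W τ) = 0
      rw [Finsupp.notMem_support_iff.1 hns, hp0]) with hW'
  have hw'app : ∀ σ, w' σ = p (w σ) := fun σ => rfl
  have hW'app : ∀ τ, W' τ = p (W τ) := fun τ => rfl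
  have hw'supp : w'.support ⊆ w.support := Finsupp.support_onFinset_subset
  have hW'supp : W'.support ⊆ W.support := Finsupp.support_onFinset_subset
  -- the boundary commutation
  have hbd : ∀ {k : ℕ} (u : SChain ℝ (k+1) X) (u' : SChain ℚ (k+1) X),
      u'.support ⊆ u.support → (∀ τ, u' τ = p (u τ)) → (∀ τ, u τ ∈ V) →
      ∀ σ, (sbdry ℚ u') σ = p ((sbdry ℝ u) σ) := by
    intro k u u' hsupp happl huV σ
    rw [sbdry_apply, sbdry_apply]
    have hf : ∀ τ ∈ u.support, u τ * ((bcoef τ σ : ℤ):ℝ) ∈ V := by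
      intro τ _
      have he : u τ * ((bcoef τ σ : ℤ):ℝ) = ((bcoef τ σ : ℚ):ℝ) * u τ := by push_cast; ring
      rw [he]; exact hmulV _ _ (huV τ)
    rw [hpsum u.support _ hf]
    rw [Finset.sum_subset hsupp (fun τ _ hτ => by
      rw [Finsupp.notMem_support_iff.1 hτ, zero_mul])]
    refine Finset.sum_congr rfl fun τ _ => ?_
    have he : u τ * ((bcoef τ σ : ℤ):ℝ) = ((bcoef τ σ : ℚ):ℝ) * u τ := by push_cast; ring
    rw [he, hsmul _ _ (huV τ), happl τ]
    ring
  have hbdW : ∀ σ, (sbdry ℚ W') σ = p ((sbdry ℝ W) σ) := hbd W W' hW'supp hW'app hWV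
  have hbdVmem : ∀ σ, (sbdry ℝ W) σ ∈ V := by
    intro σ
    rw [sbdry_apply]
    refine Submodule.sum_mem V fun τ _ => ?_
    have he : W τ * ((bcoef τ σ : ℤ):ℝ) = ((bcoef τ σ : ℚ):ℝ) * W τ := by push_cast; ring
    rw [he]; exact hmulV _ _ (hWV τ)
  refine ⟨w', W', ?_, ?_, ?_⟩
  · rw [mem_suppOn_iff]
    intro σ hσ
    have h0 := mem_suppOn_iff.1 h σ hσ
    rw [Finsupp.sub_apply, Finsupp.sub_apply] at h0 ⊢
    rw [ratToReal_apply] at h0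
    rw [hw'app, hbdW]
    have e1 : p (w σ - (y σ : ℝ)) = p (w σ) - y σ := by
      rw [hpsub _ (hwV σ) _ (hqV (y σ)), hrat]
    rw [← e1, ← hpsub _ (sub_mem (hwV σ) (hqV (y σ))) _ (hbdVmem σ), h0, hp0]
  · intro hP
    cases m with
    | zero =>
      show (0 : SChain ℚ 0 X →ₗ[ℚ] SChain ℚ (0-1) X) w' ∈ suppOn ℚ (0-1) A
      rw [LinearMap.zero_apply]
      exact zero_mem _
    | succ m' =>
      have hreal := hcyc hP
      rw [mem_suppOn_iff]
      intro ρ hρ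
      have h0 : (sbdry ℝ (n := m')) w ρ = 0 := mem_suppOn_iff.1 hreal ρ hρ
      show (sbdry ℚ (n := m')) w' ρ = 0
      exact (hbd w w' hw'supp hw'app hwV ρ).trans (by rw [h0, hp0])
  · rw [relNorm, relNorm, Finset.sum_filter, Finset.sum_filter]
    refine le_trans (le_of_eq (Finset.sum_subset hw'supp fun σ _ hns => ?_)) ?_
    · rw [Finsupp.notMem_support_iff.1 hns, norm_zero, ite_self]
    · have hle : ∀ (k : ℕ), k ≤ w.support.card → (k : ℝ) * δ ≤ ε := by
        intro k hk
        have hk' : (k:ℝ) ≤ (w.support.card : ℝ) := by exact_mod_cast hk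
        have h2 : (0:ℝ) < (w.support.card:ℝ) + 1 := by positivity
        rw [hδ]
        calc (k:ℝ) * (ε / ((w.support.card:ℝ) + 1))
            ≤ ((w.support.card:ℝ)+1) * (ε/((w.support.card:ℝ)+1)) := by
              apply mul_le_mul_of_nonneg_right ?_ (by positivity)
              linarith
          _ = ε := by field_simp
      refine le_trans (Finset.sum_le_sum
        (g := fun σ : SingSimplex m X => (if ¬ Set.range ⇑σ ⊆ A then ‖w σ‖ else 0) + δ)
        fun σ hσ => ?_) ?_
      · beta_reduce
        by_cases hc : ¬ Set.range ⇑σ ⊆ A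
        · rw [if_pos hc, if_pos hc]
          have hσs : w σ ∈ s :=
            Finset.mem_union_left _ (Finset.mem_image_of_mem _ hσ)
          have h1 := happ _ hσs
          have h2 : ‖w' σ‖ = |((p (w σ) : ℚ) : ℝ)| := by
            rw [hw'app, ← Rat.norm_cast_real, Real.norm_eq_abs]
          rw [h2, Real.norm_eq_abs]
          calc |((p (w σ) : ℚ) : ℝ)| = |(((p (w σ) : ℚ) : ℝ) - w σ) + w σ| := by ring_nf
            _ ≤ |((p (w σ) : ℚ) : ℝ) - w σ| + |w σ| := abs_add_le _ _
            _ ≤ |w σ| + δ := by linarith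
        · rw [if_neg hc, if_neg hc]
          linarith
      · rw [Finset.sum_add_distrib, Finset.sum_const, nsmul_eq_mul]
        refine add_le_add ?_ (hle _ (le_refl _))
        refine le_of_eq (Finset.sum_congr rfl fun σ _ => ?_)
        by_cases hc : ¬ Set.range ⇑σ ⊆ A
        · rw [if_pos hc, if_pos hc]
        · rw [if_neg hc, if_neg hc]

lemma sInf_eq_sInf_of_approx (S T : Set ℝ) (hS0 : ∀ r ∈ S, 0 ≤ r) (hT0 : ∀ r ∈ T, 0 ≤ r)
    (hsub : S ⊆ T) (happrox : ∀ r ∈ T, ∀ ε, 0 < ε → ∃ r' ∈ S, r' ≤ r + ε) :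
    sInf S = sInf T := by
  rcases Set.eq_empty_or_nonempty T with hT | hT
  · have hS : S = ∅ := Set.eq_empty_of_subset_empty (hT ▸ hsub)
    rw [hS, hT]
  · have hSne : S.Nonempty := by
      obtain ⟨r, hr⟩ := hT
      obtain ⟨r', hr', _⟩ := happrox r hr 1 one_pos
      exact ⟨r', hr'⟩
    apply le_antisymm
    · refine le_csInf hT fun r hr => ?_
      refine le_of_forall_pos_le_add fun ε hε => ?_
      obtain ⟨r', hr', hle⟩ := happrox r hr ε hε
      exact (csInf_le ⟨0, fun x hx => hS0 x hx⟩ hr').trans hle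
    · exact csInf_le_csInf ⟨0, fun x hx => hT0 x hx⟩ hSne hsub

lemma simVolOr_eq_simVolOrQ (n : ℕ) (A : Set X) : simVolOr n X A = simVolOrQ n X A := by
  rw [simVolOr, simVolOrQ]
  refine (sInf_eq_sInf_of_approx _ _ ?_ ?_ ?_ ?_).symm
  · rintro r ⟨z, -, rfl⟩; exact relNorm_nonneg A z
  · rintro r ⟨z, -, rfl⟩; exact relNorm_nonneg A z
  · rintro r ⟨z, ⟨c, hc, hhom⟩, rfl⟩
    exact ⟨ratToReal z, ⟨c, hc, by
      rw [← ratToReal_intToRat]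
      exact ratToReal_relHomologous hhom⟩, (relNorm_ratToReal A z).symm⟩
  · rintro r ⟨z, ⟨c, hc, W, hW⟩, rfl⟩ ε hε
    rw [← ratToReal_intToRat] at hW
    obtain ⟨w', W', h1, -, h3⟩ := chain_approx A (intToRat c) z W hW False (fun f => f.elim) hε
    exact ⟨relNorm A w', ⟨w', ⟨c, hc, ⟨W', h1⟩⟩, rfl⟩, h3⟩

lemma seminorm_eq (i : ℕ) (A : Set X) (z : SChain ℚ i X) :
    sInf {r : ℝ | ∃ z' : SChain ℚ i X, IsRelCycle ℚ i A z' ∧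
        RelHomologous ℚ i A z' z ∧ r = relNorm A z'} =
    sInf {r : ℝ | ∃ w : SChain ℝ i X, IsRelCycle ℝ i A w ∧
        RelHomologous ℝ i A w (ratToReal z) ∧ r = relNorm A w} := by
  refine sInf_eq_sInf_of_approx _ _ ?_ ?_ ?_ ?_
  · rintro r ⟨z', -, -, rfl⟩; exact relNorm_nonneg A z'
  · rintro r ⟨w, -, -, rfl⟩; exact relNorm_nonneg A w
  · rintro r ⟨z', hcyc, hhom, rfl⟩
    exact ⟨ratToReal z', ratToReal_isRelCycle hcyc, ratToReal_relHomologous hhom,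
      (relNorm_ratToReal A z').symm⟩
  · rintro r ⟨w, hcyc, ⟨W, hW⟩, rfl⟩ ε hε
    obtain ⟨w', W', h1, h2, h3⟩ := chain_approx A z w W hW True (fun _ => hcyc) hε
    exact ⟨relNorm A w', ⟨w', h2 trivial, ⟨W', h1⟩, rfl⟩, h3⟩

end Aux

/-- **Statement 10.**  For every compact oriented `n`-manifold the real and rational
simplicial volumes coincide; more generally, for every `i` the change of coefficients map
`H_i(M, ∂M; ℚ) → H_i(M, ∂M; ℝ)` preserves the ℓ¹-seminorm of every class. -/
theorem simvol_rational_eq_real (n : ℕ) (M : Type) [TopologicalSpace M] [CompactSpace M]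
    (hM : IsManifoldWithBoundary n M)
    (hor : ∀ c : ConnectedComponents M,
      HomOrientable n {x : M // ConnectedComponents.mk x = c}
        {x : {x : M // ConnectedComponents.mk x = c} | ↑x ∈ intBoundary n M}) :
    SimVol n M (intBoundary n M) = SimVolQ n M (intBoundary n M) ∧
    ∀ (i : ℕ) (z : SChain ℚ i M), IsRelCycle ℚ i (intBoundary n M) z →
      sInf {r : ℝ | ∃ z' : SChain ℚ i M, IsRelCycle ℚ i (intBoundary n M) z' ∧
          RelHomologous ℚ i (intBoundary n M) z' z ∧ r = relNorm (intBoundary n M) z'} =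
      sInf {r : ℝ | ∃ w : SChain ℝ i M, IsRelCycle ℝ i (intBoundary n M) w ∧
          RelHomologous ℝ i (intBoundary n M) w (ratToReal z) ∧
          r = relNorm (intBoundary n M) w} := by
  constructor
  · rw [SimVol, SimVolQ]
    refine finsum_congr fun c => ?_
    rw [simVolConn, if_pos (hor c)]
    exact simVolOr_eq_simVolOrQ n _
  · intro i z _
    exact seminorm_eq i _ z

end
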